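/- Let X have distribution ν on ℝ with mean 0, density p with connected support, and Stein kernel τ_ν satisfying τ_ν ≥ σ² > 0 ν-almost surely. Then for every x ≥ 0, ∫_x^∞ y p(y) dy ≥ E[X₊] · exp(−x²/(2σ²)). -/

import Mathlib

open MeasureTheory Set
open scoped ENNReal NNReal

/-- Conversion lemma: when `y ↦ y * p y` is integrable on `Ioi a` (`a ≥ 0`), the Lebesgue
integral `∫_{Ioi a} y p(y) dy` coincides with `∫_{Ioi a} y dν` for `ν = volume.withDensity p`. -/
lemma aux_conv (p : ℝ → ℝ) (hp : ∀ x, 0 ≤ p x) {a : ℝ} (ha : 0 ≤ a)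
    (hInt : IntegrableOn (fun y => y * p y) (Ioi a) volume) :
    (∫ y in Ioi a, y * p y) =
      ∫ y in Ioi a, y ∂(volume.withDensity (fun x => ENNReal.ofReal (p x))) := by
  obtain ⟨F, hFsm, hae⟩ := hInt.aestronglyMeasurable
  set μa := volume.restrict (Ioi a) with hμa
  have hy0 : ∀ᵐ y ∂μa, y ∈ Ioi a := ae_restrict_mem measurableSet_Ioi
  have hpF : ∀ᵐ y ∂μa, p y = F y / y := by
    filter_upwards [hae, hy0] with y h1 h2
    have hy : y ≠ 0 := ne_of_gt (lt_of_le_of_lt ha h2)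
    rw [← h1, mul_comm, mul_div_assoc, div_self hy, mul_one]
  have hq : AEMeasurable (fun y => Real.toNNReal (F y / y)) μa :=
    (measurable_real_toNNReal.comp (hFsm.measurable.div measurable_id)).aemeasurable
  have hpq : (fun y => ENNReal.ofReal (p y)) =ᵐ[μa]
      (fun y => ((F y / y).toNNReal : ℝ≥0∞)) := by
    filter_upwards [hpF] with y h
    rw [h]; rfl
  have hrw : (volume.withDensity (fun x => ENNReal.ofReal (p x))).restrict (Ioi a)
      = μa.withDensity (fun y => ((F y / y).toNNReal : ℝ≥0∞)) := by
    rw [restrict_withDensity measurableSet_Ioi, withDensity_congr_ae hpq]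
  rw [hrw, integral_withDensity_eq_integral_smul₀ hq]
  refine (integral_congr_ae ?_).symm
  filter_upwards [hpF] with y h
  rw [h]
  have h2 : (0:ℝ) ≤ F y / y := h ▸ hp y
  simp [NNReal.smul_def, Real.coe_toNNReal _ h2]
  ring

/-- The key a.e. inequality `σ² p(y) ≤ ∫_{Ioi y} z p(z) dz` on `Ioi a`, derived from the
Stein-kernel lower bound. -/
lemma aux_key (p : ℝ → ℝ) (hp : ∀ x, 0 ≤ p x)
    (ν : Measure ℝ) (hν : ν = volume.withDensity (fun x => ENNReal.ofReal (p x)))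
    (τ : ℝ → ℝ) (hτ : ∀ x, τ x = (∫ y in Ioi x, y * p y) / p x)
    (σ : ℝ) (hσ : 0 < σ) (hbound : ∀ᵐ x ∂ν, σ ^ 2 ≤ τ x)
    {a : ℝ} (ha : 0 ≤ a)
    (hInt : IntegrableOn (fun y => y * p y) (Ioi a) volume) :
    ∀ᵐ y ∂(volume.restrict (Ioi a)), 0 < p y → σ ^ 2 * p y ≤ ∫ z in Ioi y, z * p z := by
  obtain ⟨F, hFsm, hae⟩ := hInt.aestronglyMeasurable
  set μa := volume.restrict (Ioi a) with hμa
  have hy0 : ∀ᵐ y ∂μa, y ∈ Ioi a := ae_restrict_mem measurableSet_Ioi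
  have hpF : ∀ᵐ y ∂μa, p y = F y / y := by
    filter_upwards [hae, hy0] with y h1 h2
    have hy : y ≠ 0 := ne_of_gt (lt_of_le_of_lt ha h2)
    rw [← h1, mul_comm, mul_div_assoc, div_self hy, mul_one]
  set T : Set ℝ := {w | ¬ σ ^ 2 ≤ τ w} with hTdef
  have hT : ν T = 0 := by
    rw [ae_iff] at hbound; exact hbound
  set T' : Set ℝ := toMeasurable ν T with hT'def
  have hT'meas : MeasurableSet T' := measurableSet_toMeasurable ν T
  have hTT' : T ⊆ T' := subset_toMeasurable ν T
  have hT' : ν T' = 0 := by rw [measure_toMeasurable]; exact hT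
  have hT'l : ∫⁻ y in T' ∩ Ioi a, ENNReal.ofReal (p y) ∂volume = 0 := by
    have h1 : ∫⁻ y in T' ∩ Ioi a, ENNReal.ofReal (p y) ∂volume
        ≤ ∫⁻ y in T', ENNReal.ofReal (p y) ∂volume :=
      lintegral_mono_set inter_subset_left
    have h2 : ∫⁻ y in T', ENNReal.ofReal (p y) ∂volume = 0 := by
      rw [← withDensity_apply _ hT'meas, ← hν]; exact hT'
    exact le_antisymm (h1.trans h2.le) (zero_le)
  have hGmeas : Measurable (fun y => ENNReal.ofReal (F y / y)) :=
    (hFsm.measurable.div measurable_id).ennreal_ofReal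
  have hT'l2 : ∫⁻ y in T' ∩ Ioi a, ENNReal.ofReal (F y / y) ∂volume = 0 := by
    rw [← hT'l]
    apply lintegral_congr_ae
    have h3 : ∀ᵐ y ∂(volume.restrict (T' ∩ Ioi a)), p y = F y / y := by
      have : volume.restrict (T' ∩ Ioi a) = μa.restrict T' := by
        rw [hμa, Measure.restrict_restrict hT'meas]
      rw [this]
      exact ae_restrict_of_ae hpF
    filter_upwards [h3] with y h
    rw [h]
  have hzero : ∀ᵐ y ∂volume, y ∈ T' ∩ Ioi a → ENNReal.ofReal (F y / y) = 0 :=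
    (setLIntegral_eq_zero_iff (hT'meas.inter measurableSet_Ioi) hGmeas).1 hT'l2
  have hzero' : ∀ᵐ y ∂μa, y ∈ T' ∩ Ioi a → ENNReal.ofReal (F y / y) = 0 :=
    ae_restrict_of_ae hzero
  filter_upwards [hpF, hzero', hy0] with y h1 h2 h3 hpy
  by_cases hyT : y ∈ T'
  · exfalso
    have h5 := h2 ⟨hyT, h3⟩
    rw [← h1, ENNReal.ofReal_eq_zero] at h5
    exact absurd h5 (not_le.2 hpy)
  · have h8 : σ ^ 2 ≤ τ y := by
      by_contra h9
      exact hyT (hTT' h9)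
    rw [hτ y] at h8
    exact (le_div_iff₀ hpy).1 h8

/-- The Grönwall-type lower bound for the tail function, on `[a, b]` with `0 ≤ a`. -/
lemma aux_gronwall (p : ℝ → ℝ) (hp : ∀ x, 0 ≤ p x) {σ a b : ℝ} (hσ : 0 < σ)
    (ha : 0 ≤ a) (hab : a ≤ b)
    (hInt : IntegrableOn (fun y => y * p y) (Ioi a) volume)
    (hkey : ∀ᵐ y ∂(volume.restrict (Ioi a)), 0 < p y → σ ^ 2 * p y ≤ ∫ z in Ioi y, z * p z) :
    (∫ y in Ioi a, y * p y) * Real.exp (-(b ^ 2 - a ^ 2) / (2 * σ ^ 2))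
      ≤ ∫ y in Ioi b, y * p y := by
  set H : ℝ → ℝ := fun t => ∫ y in Ioi t, y * p y with hH
  have hσ2 : (0:ℝ) < σ ^ 2 := by positivity
  have hIntt : ∀ t, a ≤ t → IntegrableOn (fun y => y * p y) (Ioi t) volume :=
    fun t ht => hInt.mono_set (Ioi_subset_Ioi ht)
  have hIoc : ∀ s t, a ≤ s → IntegrableOn (fun y => y * p y) (Ioc s t) volume :=
    fun s t hs => hInt.mono_set (Ioc_subset_Ioi_self.trans (Ioi_subset_Ioi hs))
  have hsplit : ∀ s t, a ≤ s → s ≤ t → H s = (∫ y in Ioc s t, y * p y) + H t := by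
    intro s t hs hst
    rw [hH]
    rw [← setIntegral_union (Ioc_disjoint_Ioi le_rfl) measurableSet_Ioi (hIoc s t hs)
      (hIntt t (hs.trans hst)), Ioc_union_Ioi_eq_Ioi hst]
  have hHnn : ∀ t, a ≤ t → 0 ≤ H t := fun t ht =>
    setIntegral_nonneg measurableSet_Ioi
      (fun y hy => mul_nonneg ((ha.trans ht).trans (le_of_lt hy)) (hp y))
  have hanti : ∀ s t, a ≤ s → s ≤ t → H t ≤ H s := by
    intro s t hs hst
    have h0 : 0 ≤ ∫ y in Ioc s t, y * p y :=
      setIntegral_nonneg measurableSet_Ioc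
        (fun y hy => mul_nonneg ((ha.trans hs).trans hy.1.le) (hp y))
    have := hsplit s t hs hst
    linarith
  have hcont : ContinuousOn H (Ici a) := by
    intro t ht
    have hIcc : IntegrableOn (fun y => y * p y) (Icc a (t + 1)) volume := by
      rw [integrableOn_Icc_iff_integrableOn_Ioc]
      exact hIoc a (t + 1) le_rfl
    have hprim := intervalIntegral.continuousOn_primitive hIcc
    have heq : ∀ u ∈ Icc a (t + 1), H u = H a - ∫ y in Ioc a u, y * p y := by
      intro u hu
      have := hsplit a u le_rfl hu.1
      linarith
    have hM : ContinuousOn H (Icc a (t + 1)) :=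
      (continuousOn_const.sub hprim).congr heq
    have hmem : Icc a (t + 1) ∈ nhdsWithin t (Ici a) := by
      rw [← Ici_inter_Iic]
      exact Filter.inter_mem self_mem_nhdsWithin
        (nhdsWithin_le_nhds (Iic_mem_nhds (by linarith [mem_Ici.1 ht])))
    exact (hM t ⟨ht, by linarith [mem_Ici.1 ht]⟩).mono_of_mem_nhdsWithin hmem
  have hae2 : ∀ᵐ y ∂(volume.restrict (Ioi a)), y * p y ≤ y * H y / σ ^ 2 := by
    filter_upwards [hkey, ae_restrict_mem measurableSet_Ioi] with y h1 h2
    have hy0 : 0 ≤ y := ha.trans (le_of_lt h2)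
    by_cases hpy : 0 < p y
    · have h3 := h1 hpy
      calc y * p y ≤ y * (H y / σ ^ 2) := by
            refine mul_le_mul_of_nonneg_left ((le_div_iff₀ hσ2).2 ?_) hy0
            rw [mul_comm]; exact h3
        _ = y * H y / σ ^ 2 := by ring
    · have hpy0 : p y = 0 := le_antisymm (not_lt.1 hpy) (hp y)
      rw [hpy0, mul_zero]
      exact div_nonneg (mul_nonneg hy0 (hHnn y (le_of_lt h2))) hσ2.le
  have hf' : ∀ t ∈ Ico a b, ∀ r, (t * H t / σ ^ 2) < r →
      ∃ᶠ z in nhdsWithin t (Ioi t), slope (fun u => -H u) t z < r := by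
    intro t ht r hr
    have htendsto : Filter.Tendsto (fun z => z * H t / σ ^ 2) (nhdsWithin t (Ioi t))
        (nhds (t * H t / σ ^ 2)) :=
      ((continuous_id.mul continuous_const).div_const _).continuousAt.continuousWithinAt
    have hev1 : ∀ᶠ z in nhdsWithin t (Ioi t), z * H t / σ ^ 2 < r :=
      htendsto.eventually_lt_const hr
    have hev2 : ∀ᶠ z in nhdsWithin t (Ioi t), slope (fun u => -H u) t z ≤ z * H t / σ ^ 2 := by
      filter_upwards [self_mem_nhdsWithin] with z hz
      have htz : t < z := hz
      have hta : a ≤ t := ht.1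
      have hIntRHS : IntegrableOn (fun y => y * H y / σ ^ 2) (Ioc t z) volume := by
        have hc : ContinuousOn (fun y => y * H y / σ ^ 2) (Icc t z) := by
          refine ContinuousOn.div_const ?_ _
          exact continuousOn_id.mul (hcont.mono (fun y hy => hta.trans hy.1))
        exact (hc.integrableOn_Icc).mono_set Ioc_subset_Icc_self
      have hslope : slope (fun u => -H u) t z = (∫ y in Ioc t z, y * p y) / (z - t) := by
        rw [slope_def_field]
        have h2 := hsplit t z hta htz.le
        have h3 : -H z - -H t = ∫ y in Ioc t z, y * p y := by linarith
        rw [h3]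
      rw [hslope, div_le_iff₀ (by linarith)]
      have hint1 : (∫ y in Ioc t z, y * p y) ≤ ∫ y in Ioc t z, y * H y / σ ^ 2 := by
        refine integral_mono_ae (hIoc t z hta) hIntRHS ?_
        exact ae_restrict_of_ae_restrict_of_subset
          (Ioc_subset_Ioi_self.trans (Ioi_subset_Ioi hta)) hae2
      have hint2 : (∫ y in Ioc t z, y * H y / σ ^ 2) ≤ (z * H t / σ ^ 2) * (z - t) := by
        have hconst : (∫ _ in Ioc t z, (z * H t / σ ^ 2)) = (z * H t / σ ^ 2) * (z - t) := by
          rw [setIntegral_const, measureReal_def, Real.volume_Ioc, ENNReal.toReal_ofReal (by linarith)]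
          rw [smul_eq_mul, mul_comm]
        rw [← hconst]
        refine setIntegral_mono_on hIntRHS (integrableOn_const ?_)
          measurableSet_Ioc ?_
        · rw [Real.volume_Ioc]; exact ENNReal.ofReal_ne_top
        · intro y hy
          have hy1 : t < y := hy.1
          have hy2 : y ≤ z := hy.2
          have hyH : H y ≤ H t := hanti t y hta hy1.le
          have hzn : (0:ℝ) ≤ z := (ha.trans hta).trans htz.le
          have hyn : (0:ℝ) ≤ y := (ha.trans hta).trans hy1.le
          have : y * H y ≤ z * H t :=
            mul_le_mul hy2 hyH (hHnn y ((hta.trans hy1.le))) hzn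
          exact (div_le_div_iff_of_pos_right hσ2).2 this
      linarith
    exact ((hev2.and hev1).mono (fun z hz => lt_of_le_of_lt hz.1 hz.2)).frequently
  have main : ∀ ε, 0 < ε → H a * Real.exp (-(b ^ 2 - a ^ 2) / (2 * σ ^ 2))
      ≤ H b + ε * (b - a + 1) := by
    intro ε hε
    set B : ℝ → ℝ := fun t => -H a * Real.exp (-(t ^ 2 - a ^ 2) / (2 * σ ^ 2))
      + ε * (t - a + 1) with hBdef
    set B' : ℝ → ℝ := fun t => H a * Real.exp (-(t ^ 2 - a ^ 2) / (2 * σ ^ 2)) * t / σ ^ 2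
      + ε with hB'def
    have hBderiv : ∀ t, HasDerivAt B (B' t) t := by
      intro t
      have h1 : HasDerivAt (fun u : ℝ => -(u ^ 2 - a ^ 2) / (2 * σ ^ 2))
          (-(2 * t ^ 1) / (2 * σ ^ 2)) t :=
        (((hasDerivAt_pow 2 t).sub_const (a ^ 2)).neg).div_const (2 * σ ^ 2)
      have h2 := (h1.exp.const_mul (-H a)).add
        ((((hasDerivAt_id t).sub_const a).add_const 1).const_mul ε)
      refine h2.congr_deriv ?_
      rw [hB'def]
      simp only [pow_one, mul_one, id_eq]
      field_simp
    have hfcont : ContinuousOn (fun t => -H t) (Icc a b) :=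
      (hcont.mono (fun y hy => hy.1)).neg
    have hfa : -H a ≤ B a := by
      rw [hBdef]
      simp only [sub_self, neg_zero, zero_div, Real.exp_zero, mul_one]
      nlinarith
    have hbnd : ∀ t ∈ Ico a b, -H t = B t → t * H t / σ ^ 2 < B' t := by
      intro t ht heq
      set E := Real.exp (-(t ^ 2 - a ^ 2) / (2 * σ ^ 2)) with hE
      have hHt : H t = H a * E - ε * (t - a + 1) := by
        rw [hBdef] at heq
        simp only [← hE] at heq
        linarith
      have ht0 : 0 ≤ t := ha.trans ht.1
      have h5 : 0 ≤ ε * (t - a + 1) := by nlinarith [ht.1]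
      have h6 : 0 ≤ (ε * (t - a + 1)) * t / σ ^ 2 :=
        div_nonneg (mul_nonneg h5 ht0) hσ2.le
      have h7 : t * H t / σ ^ 2
          = H a * E * t / σ ^ 2 - (ε * (t - a + 1)) * t / σ ^ 2 := by
        rw [hHt]; ring
      rw [hB'def]
      simp only [← hE]
      calc t * H t / σ ^ 2 ≤ H a * E * t / σ ^ 2 := by linarith
        _ < H a * E * t / σ ^ 2 + ε := by linarith
    have happ := image_le_of_liminf_slope_right_lt_deriv_boundary hfcont hf' hfa hBderiv hbnd
      (right_mem_Icc.2 hab)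
    rw [hBdef] at happ
    simp only at happ
    linarith
  have hba1 : (0:ℝ) < b - a + 1 := by linarith
  refine le_of_forall_pos_le_add ?_
  intro δ hδ
  have h9 := main (δ / (b - a + 1)) (by positivity)
  calc H a * Real.exp (-(b ^ 2 - a ^ 2) / (2 * σ ^ 2))
      ≤ H b + (δ / (b - a + 1)) * (b - a + 1) := h9
    _ = H b + δ := by rw [div_mul_cancel₀ _ (ne_of_gt hba1)]

theorem lower_tail_integral_bound
    (p : ℝ → ℝ) (hp : ∀ x, 0 ≤ p x)
    (ν : Measure ℝ)
    (hν : ν = volume.withDensity (fun x => ENNReal.ofReal (p x)))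
    [IsProbabilityMeasure ν]
    (hconn : OrdConnected {x | 0 < p x})
    (hmom : Integrable (fun x => x) ν)
    (hmean : ∫ x, x ∂ν = 0)
    (τ : ℝ → ℝ) (hτ : ∀ x, τ x = (∫ y in Ioi x, y * p y) / p x)
    (σ : ℝ) (hσ : 0 < σ) (hbound : ∀ᵐ x ∂ν, σ ^ 2 ≤ τ x)
    (x : ℝ) (hx : 0 ≤ x) :
    (∫ y, max y 0 ∂ν) * Real.exp (-x ^ 2 / (2 * σ ^ 2))
      ≤ ∫ y in Ioi x, y * p y := by
  by_cases hcase : IntegrableOn (fun y => y * p y) (Ioi x) volume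
  case neg =>
    have hHx : (∫ y in Ioi x, y * p y) = 0 := integral_undef hcase
    have hτ0 : ∀ w, w ≤ x → τ w = 0 := by
      intro w hw
      rw [hτ w]
      have hni : ¬ IntegrableOn (fun y => y * p y) (Ioi w) volume := fun h =>
        hcase (h.mono_set (Ioi_subset_Ioi hw))
      rw [integral_undef hni, zero_div]
    have haegt : ∀ᵐ y ∂ν, x < y := by
      rw [ae_iff]
      have h1 : ν {w | ¬ σ ^ 2 ≤ τ w} = 0 := ae_iff.1 hbound
      refine measure_mono_null ?_ h1
      intro w hw
      have hwx : w ≤ x := not_lt.1 hw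
      simp only [mem_setOf_eq, hτ0 w hwx]
      exact not_le.2 (by positivity)
    have hc : (∫ y, max y 0 ∂ν) = 0 := by
      have heq : (∫ y, max y 0 ∂ν) = ∫ y, y ∂ν := by
        apply integral_congr_ae
        filter_upwards [haegt] with y hy
        exact max_eq_left (hx.trans hy.le)
      rw [heq, hmean]
    rw [hc, hHx, zero_mul]
  case pos =>
    set S : Set ℝ := {a : ℝ | 0 ≤ a ∧ IntegrableOn (fun y => y * p y) (Ioi a) volume}
      with hSdef
    have hxS : x ∈ S := ⟨hx, hcase⟩
    have hSne : S.Nonempty := ⟨x, hxS⟩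
    have hbdd : BddBelow S := ⟨0, fun a ha => ha.1⟩
    set t0 := sInf S with ht0def
    have ht00 : 0 ≤ t0 := le_csInf hSne (fun b hb => hb.1)
    have ht0x : t0 ≤ x := csInf_le hbdd hxS
    have hmax : Integrable (fun y => max y 0) ν := hmom.pos_part
    have hc : (∫ y, max y 0 ∂ν) = ∫ y in Ioi 0, y ∂ν := by
      have h1 := integral_add_compl (measurableSet_Ioi (a := (0:ℝ))) hmax
      rw [compl_Ioi] at h1
      have h2 : (∫ y in Iic (0:ℝ), max y 0 ∂ν) = 0 := by
        rw [setIntegral_congr_fun measurableSet_Iic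
          (fun y (hy : y ∈ Iic (0:ℝ)) => max_eq_right hy : EqOn _ (fun _ => (0:ℝ)) _)]
        simp
      have h3 : (∫ y in Ioi (0:ℝ), max y 0 ∂ν) = ∫ y in Ioi 0, y ∂ν :=
        setIntegral_congr_fun measurableSet_Ioi
          (fun y (hy : y ∈ Ioi (0:ℝ)) => max_eq_left (le_of_lt hy))
      rw [h2, h3] at h1
      rw [← h1]; ring
    have hνIio : t0 ≠ 0 → ν (Iio t0) = 0 := by
      intro ht0ne
      have ht0pos : 0 < t0 := lt_of_le_of_ne ht00 (Ne.symm ht0ne)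
      have h1 : ν {w | ¬ σ ^ 2 ≤ τ w} = 0 := ae_iff.1 hbound
      refine measure_mono_null ?_ h1
      intro w hw
      have hwlt : w < t0 := hw
      have hnint : ¬ IntegrableOn (fun y => y * p y) (Ioi w) volume := by
        intro h
        rcases le_or_gt 0 w with h0 | h0
        · exact absurd (csInf_le hbdd ⟨h0, h⟩) (not_le.2 hwlt)
        · have h0S : (0:ℝ) ∈ S := ⟨le_rfl, h.mono_set (Ioi_subset_Ioi h0.le)⟩
          exact absurd (csInf_le hbdd h0S) (not_le.2 ht0pos)
      simp only [mem_setOf_eq, hτ w, integral_undef hnint, zero_div]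
      exact not_le.2 (by positivity)
    have hsing : ν ({t0} : Set ℝ) = 0 := by
      rw [hν, withDensity_apply _ (measurableSet_singleton t0)]
      have h0 : volume.restrict ({t0} : Set ℝ) = 0 :=
        Measure.restrict_eq_zero.2 (measure_singleton t0)
      rw [h0, lintegral_zero_measure]
    refine le_of_forall_pos_le_add ?_
    intro δ hδ
    -- find a good level `u` slightly above `t0`
    have hseq : Filter.Tendsto (fun n : ℕ => t0 + 1 / (n + 1)) Filter.atTop (nhds t0) := by
      have := tendsto_one_div_add_atTop_nhds_zero_nat (𝕜 := ℝ)
      have h2 := this.const_add t0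
      simpa using h2
    have hiInter : (⋂ n : ℕ, Icc t0 (t0 + 1 / (n + 1))) = {t0} := by
      ext y
      simp only [mem_iInter, mem_Icc, mem_singleton_iff]
      constructor
      · intro h
        have h1 : y ≤ t0 := ge_of_tendsto hseq
          (Filter.Eventually.of_forall (fun n => (h n).2))
        exact le_antisymm h1 (h 0).1
      · rintro rfl
        exact fun n => ⟨le_rfl, le_add_of_nonneg_right (by positivity)⟩
    have htend : Filter.Tendsto (fun n : ℕ => x * (ν (Icc t0 (t0 + 1 / (n + 1)))).toReal)
        Filter.atTop (nhds 0) := by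
      have h1 : Filter.Tendsto (fun n : ℕ => ν (Icc t0 (t0 + 1 / (n + 1)))) Filter.atTop
          (nhds (ν (⋂ n : ℕ, Icc t0 (t0 + 1 / (n + 1))))) := by
        apply tendsto_measure_iInter_atTop
        · exact fun n => measurableSet_Icc.nullMeasurableSet
        · intro m n hmn
          apply Icc_subset_Icc le_rfl
          have : 1 / ((n:ℝ) + 1) ≤ 1 / ((m:ℝ) + 1) := by
            apply one_div_le_one_div_of_le (by positivity)
            exact_mod_cast Nat.succ_le_succ hmn
          linarith
        · exact ⟨0, measure_ne_top ν _⟩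
      rw [hiInter, hsing] at h1
      have h2 := (ENNReal.tendsto_toReal (by simp : (0:ℝ≥0∞) ≠ ⊤)).comp h1
      simpa using h2.const_mul x
    obtain ⟨n, hn⟩ := (htend.eventually_lt_const hδ).exists
    obtain ⟨a0, ha0S, ha0lt⟩ := exists_lt_of_csInf_lt hSne
      (lt_add_of_pos_right t0 (by positivity : (0:ℝ) < 1 / (n + 1)))
    set a := min a0 x with hadef
    have haS : a ∈ S := by
      rcases le_total a0 x with h | h
      · rw [hadef, min_eq_left h]; exact ha0S
      · rw [hadef, min_eq_right h]; exact hxS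
    have hta : t0 ≤ a := le_min (csInf_le hbdd ha0S) ht0x
    have hax : a ≤ x := min_le_right _ _
    have halt : a ≤ t0 + 1 / (n + 1) := (min_le_left _ _).trans ha0lt.le
    have ha0 : 0 ≤ a := ht00.trans hta
    have hH_a : (∫ y in Ioi a, y * p y) = ∫ y in Ioi a, y ∂ν := by
      rw [hν]; exact aux_conv p hp ha0 haS.2
    have hsplitν : (∫ y in Ioi (0:ℝ), y ∂ν) = (∫ y in Ioc 0 a, y ∂ν) + ∫ y in Ioi a, y ∂ν := by
      rw [← setIntegral_union (Ioc_disjoint_Ioi le_rfl) measurableSet_Ioi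
        hmom.integrableOn hmom.integrableOn, Ioc_union_Ioi_eq_Ioi ha0]
    -- bound the middle term
    have hnull : ν (Ioc 0 a \ Icc t0 a) = 0 := by
      rcases eq_or_ne t0 0 with h | h
      · have he : Ioc 0 a \ Icc t0 a = ∅ := by
          rw [h]
          exact diff_eq_empty.2 Ioc_subset_Icc_self
        rw [he]; exact measure_empty
      · refine measure_mono_null ?_ (hνIio h)
        rintro y ⟨hy1, hy2⟩
        simp only [mem_Icc, not_and, not_le] at hy2
        by_contra hcon
        have hge : t0 ≤ y := not_lt.1 hcon
        exact absurd hy1.2 (not_le.2 (hy2 hge))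
    have haeq : (Ioc 0 a : Set ℝ) =ᵐ[ν] ((Ioc 0 a ∩ Icc t0 a : Set ℝ)) := by
      rw [ae_eq_set]
      constructor
      · rw [diff_self_inter]; exact hnull
      · have he : (Ioc 0 a ∩ Icc t0 a) \ Ioc 0 a = ∅ := diff_eq_empty.2 inter_subset_left
        rw [he]; exact measure_empty
    have hmid : |∫ y in Ioc 0 a, y ∂ν| < δ := by
      rw [setIntegral_congr_set haeq]
      have hb2 : ‖∫ y in Ioc 0 a ∩ Icc t0 a, y ∂ν‖
          ≤ x * (ν (Ioc 0 a ∩ Icc t0 a)).toReal := by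
        refine norm_setIntegral_le_of_norm_le_const (measure_lt_top ν _)
          ?_
        intro y hy
        rw [Real.norm_eq_abs, abs_of_pos hy.1.1]
        exact hy.1.2.trans hax
      rw [Real.norm_eq_abs] at hb2
      refine lt_of_le_of_lt (hb2.trans ?_) hn
      have hsub : Ioc 0 a ∩ Icc t0 a ⊆ Icc t0 (t0 + 1 / (n + 1)) := by
        rintro y ⟨hy1, hy2⟩
        exact ⟨hy2.1, hy2.2.trans halt⟩
      have hmono := measure_mono (μ := ν) hsub
      exact mul_le_mul_of_nonneg_left
        (ENNReal.toReal_le_toReal (measure_ne_top ν _) (measure_ne_top ν _) |>.2 hmono) hx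
    -- assemble
    have hkey := aux_key p hp ν hν τ hτ σ hσ hbound ha0 haS.2
    have hgron := aux_gronwall p hp hσ ha0 hax haS.2 hkey
    set c := (∫ y, max y 0 ∂ν) with hcdef
    set Ha := (∫ y in Ioi a, y ∂ν) with hHadef
    set Hx := (∫ y in Ioi x, y * p y) with hHxdef
    have h1 : c - δ ≤ Ha := by
      have := abs_lt.1 hmid
      have h2 : c = (∫ y in Ioc 0 a, y ∂ν) + Ha := by rw [hc, hsplitν]
      linarith [this.1, this.2]
    have h3 : 0 ≤ Ha :=
      setIntegral_nonneg measurableSet_Ioi (fun y hy => ha0.trans (le_of_lt hy))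
    set E0 := Real.exp (-x ^ 2 / (2 * σ ^ 2)) with hE0def
    set E1 := Real.exp (-(x ^ 2 - a ^ 2) / (2 * σ ^ 2)) with hE1def
    have h2σ2 : (0:ℝ) < 2 * σ ^ 2 := by positivity
    have hE01 : E0 ≤ E1 := by
      rw [hE0def, hE1def]
      apply Real.exp_le_exp.2
      apply (div_le_div_iff_of_pos_right h2σ2).2
      nlinarith [sq_nonneg a]
    have hE0pos : 0 < E0 := Real.exp_pos _
    have hE0le1 : E0 ≤ 1 := by
      rw [hE0def]
      apply Real.exp_le_one_iff.2
      have hx2 : (0:ℝ) ≤ x ^ 2 := sq_nonneg x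
      exact div_nonpos_of_nonpos_of_nonneg (by linarith) h2σ2.le
    have h4 : Ha * E1 ≤ Hx := by
      have h5 := hgron
      rw [hH_a] at h5
      exact h5
    have hp1 : c ≤ Ha + δ := by linarith
    have p1 : c * E0 ≤ Ha * E0 + δ * E0 := by
      calc c * E0 ≤ (Ha + δ) * E0 := mul_le_mul_of_nonneg_right hp1 hE0pos.le
        _ = Ha * E0 + δ * E0 := by ring
    have p2 : Ha * E0 ≤ Ha * E1 := mul_le_mul_of_nonneg_left hE01 h3
    have p3 : δ * E0 ≤ δ := mul_le_of_le_one_right hδ.le hE0le1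
    linarith [p1, p2, p3, h4]
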